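/- Let g₁ and g₂ be nonzero finite-dimensional simple Lie algebras over a field of characteristic zero, and let g ⊆ g₁ ⊕ g₂ be a semisimple Lie subalgebra such that both projections g → g₁ and g → g₂ are surjective. Then either g = g₁ ⊕ g₂, or there exists a Lie algebra isomorphism φ: g₁ ≅ g₂ such that g is the graph of φ. In particular, if g₁ and g₂ are not isomorphic, then g = g₁ ⊕ g₂. -/

import Mathlib

section ProdLie

variable (R : Type*) [CommRing R]
variable (L1 L2 : Type*) [LieRing L1] [LieRing L2] [LieAlgebra R L1] [LieAlgebra R L2]

/-- The product of two Lie rings, with componentwise bracket. -/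
instance Prod.instLieRing : LieRing (L1 × L2) where
  bracket x y := (⁅x.1, y.1⁆, ⁅x.2, y.2⁆)
  add_lie x y z := by ext <;> simp [add_lie]
  lie_add x y z := by ext <;> simp [lie_add]
  lie_self x := by ext <;> simp
  leibniz_lie x y z := by ext <;> simp

/-- The product of two Lie algebras. -/
instance Prod.instLieAlgebra : LieAlgebra R (L1 × L2) where
  lie_smul t x y := by ext; exacts [lie_smul t x.1 y.1, lie_smul t x.2 y.2]

end ProdLie

section Aux

variable {R : Type*} [CommRing R]
variable {L1 L2 : Type*} [LieRing L1] [LieRing L2] [LieAlgebra R L1] [LieAlgebra R L2]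

@[simp] lemma prod_lie_def (x y : L1 × L2) : ⁅x, y⁆ = (⁅x.1, y.1⁆, ⁅x.2, y.2⁆) := rfl

/-- First projection as a Lie algebra homomorphism. -/
def fstLieHom : (L1 × L2) →ₗ⁅R⁆ L1 :=
  { LinearMap.fst R L1 L2 with map_lie' := rfl }

/-- Second projection as a Lie algebra homomorphism. -/
def sndLieHom : (L1 × L2) →ₗ⁅R⁆ L2 :=
  { LinearMap.snd R L1 L2 with map_lie' := rfl }

@[simp] lemma fstLieHom_apply (x : L1 × L2) : (fstLieHom (R := R) x : L1) = x.1 := rfl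
@[simp] lemma sndLieHom_apply (x : L1 × L2) : (sndLieHom (R := R) x : L2) = x.2 := rfl

end Aux

/-- if `g₁`, `g₂` are nonzero finite-dimensional simple Lie
algebras over a field of characteristic zero and `g ⊆ g₁ ⊕ g₂` is a
semisimple Lie subalgebra projecting onto both factors, then either
`g = g₁ ⊕ g₂` or `g` is the graph of a Lie algebra isomorphism `g₁ ≅ g₂`;
in particular, if `g₁` and `g₂` are not isomorphic, `g = g₁ ⊕ g₂`. -/
theorem stmt13 (Q : Type*) [Field Q] [CharZero Q]
    (g₁ g₂ : Type*) [LieRing g₁] [LieAlgebra Q g₁] [LieRing g₂] [LieAlgebra Q g₂]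
    [Nontrivial g₁] [Nontrivial g₂]
    [Module.Finite Q g₁] [Module.Finite Q g₂]
    [LieAlgebra.IsSimple Q g₁] [LieAlgebra.IsSimple Q g₂]
    (g : LieSubalgebra Q (g₁ × g₂))
    (hss : LieAlgebra.IsSemisimple Q g)
    (hsurj1 : Function.Surjective fun x : g => (x : g₁ × g₂).1)
    (hsurj2 : Function.Surjective fun x : g => (x : g₁ × g₂).2) :
    ((∀ x : g₁ × g₂, x ∈ g) ∨
      ∃ e : g₁ ≃ₗ⁅Q⁆ g₂, ∀ x : g₁ × g₂, x ∈ g ↔ e x.1 = x.2) ∧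
    (IsEmpty (g₁ ≃ₗ⁅Q⁆ g₂) → ∀ x : g₁ × g₂, x ∈ g) := by
  have main : (∀ x : g₁ × g₂, x ∈ g) ∨
      ∃ e : g₁ ≃ₗ⁅Q⁆ g₂, ∀ x : g₁ × g₂, x ∈ g ↔ e x.1 = x.2 := by
    by_cases htop : ∀ x : g₁ × g₂, x ∈ g
    · exact Or.inl htop
    · right
      -- If all (a, 0) are in g, then g is everything.
      have key1 : ¬ (∀ a : g₁, ((a, 0) : g₁ × g₂) ∈ g) := by
        intro h
        apply htop
        intro x
        obtain ⟨y, hy⟩ := hsurj2 x.2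
        have hsum : ((x.1 - (y : g₁ × g₂).1, (0 : g₂)) + (y : g₁ × g₂)) ∈ g :=
          g.add_mem (h _) y.2
        have heq : ((x.1 - (y : g₁ × g₂).1, (0 : g₂)) + (y : g₁ × g₂)) = x := by
          ext
          · simp
          · simpa using hy
        rwa [heq] at hsum
      have key2 : ¬ (∀ b : g₂, ((0, b) : g₁ × g₂) ∈ g) := by
        intro h
        apply htop
        intro x
        obtain ⟨y, hy⟩ := hsurj1 x.1
        have hsum : (((0 : g₁), x.2 - (y : g₁ × g₂).2) + (y : g₁ × g₂)) ∈ g :=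
          g.add_mem (h _) y.2
        have heq : (((0 : g₁), x.2 - (y : g₁ × g₂).2) + (y : g₁ × g₂)) = x := by
          ext
          · simpa using hy
          · simp
        rwa [heq] at hsum
      -- The kernels on each side are ideals.
      set I1 : LieIdeal Q g₁ :=
        { carrier := {a : g₁ | ((a, 0) : g₁ × g₂) ∈ g}
          add_mem' := fun {a b} ha hb => by
            have := g.add_mem ha hb
            simpa using this
          zero_mem' := by
            have : ((0 : g₁ × g₂)) ∈ g := g.zero_mem
            exact this
          smul_mem' := fun c a ha => by
            have := g.smul_mem c ha
            simpa [Prod.smul_mk] using this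
          lie_mem := fun {x m} hm => by
            obtain ⟨y, hy⟩ := hsurj1 x
            have := g.lie_mem y.2 hm
            simp only [prod_lie_def, lie_zero] at this
            simp only [Set.mem_setOf_eq] at hm ⊢
            have hy' : (y : g₁ × g₂).1 = x := hy
            rwa [hy'] at this } with hI1def
      set I2 : LieIdeal Q g₂ :=
        { carrier := {b : g₂ | (((0 : g₁), b) : g₁ × g₂) ∈ g}
          add_mem' := fun {a b} ha hb => by
            have := g.add_mem ha hb
            simpa using this
          zero_mem' := by
            have : ((0 : g₁ × g₂)) ∈ g := g.zero_mem
            exact this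
          smul_mem' := fun c a ha => by
            have := g.smul_mem c ha
            simpa [Prod.smul_mk] using this
          lie_mem := fun {x m} hm => by
            obtain ⟨y, hy⟩ := hsurj2 x
            have := g.lie_mem y.2 hm
            simp only [prod_lie_def, lie_zero] at this
            simp only [Set.mem_setOf_eq] at hm ⊢
            have hy' : (y : g₁ × g₂).2 = x := hy
            rwa [hy'] at this } with hI2def
      -- By simplicity, both kernels are trivial.
      have hK1 : ∀ a : g₁, ((a, 0) : g₁ × g₂) ∈ g → a = 0 := by
        rcases LieAlgebra.IsSimple.eq_bot_or_eq_top I1 with hbot | htop1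
        · intro a ha
          have : a ∈ I1 := ha
          rw [hbot] at this
          simpa using this
        · exact absurd (fun a => show a ∈ I1 by rw [htop1]; trivial) key1
      have hK2 : ∀ b : g₂, (((0 : g₁), b) : g₁ × g₂) ∈ g → b = 0 := by
        rcases LieAlgebra.IsSimple.eq_bot_or_eq_top I2 with hbot | htop2
        · intro b hb
          have : b ∈ I2 := hb
          rw [hbot] at this
          simpa using this
        · exact absurd (fun b => show b ∈ I2 by rw [htop2]; trivial) key2
      -- The two projections restricted to g are Lie algebra isomorphisms.
      let p1 : g →ₗ⁅Q⁆ g₁ := (fstLieHom (R := Q)).comp g.incl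
      let p2 : g →ₗ⁅Q⁆ g₂ := (sndLieHom (R := Q)).comp g.incl
      have hp1 : ∀ x : g, p1 x = (x : g₁ × g₂).1 := fun _ => rfl
      have hp2 : ∀ x : g, p2 x = (x : g₁ × g₂).2 := fun _ => rfl
      have hb1 : Function.Bijective p1 := by
        constructor
        · intro a b hab
          have hd : ((a : g₁ × g₂) - b) ∈ g := g.sub_mem a.2 b.2
          have h1 : ((a : g₁ × g₂) - b).1 = 0 := by
            have : (a : g₁ × g₂).1 = (b : g₁ × g₂).1 := hab
            simp [this]
          have hd' : (((0 : g₁), ((a : g₁ × g₂) - b).2) : g₁ × g₂) ∈ g := by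
            rwa [show (((0 : g₁), ((a : g₁ × g₂) - b).2) : g₁ × g₂)
                = (a : g₁ × g₂) - b from Prod.ext h1.symm rfl]
          have h2 := hK2 _ hd'
          have : (a : g₁ × g₂) = b := by
            have := sub_eq_zero.mp (Prod.ext h1 h2 : ((a : g₁ × g₂) - b) = 0)
            exact this
          exact Subtype.ext this
        · exact hsurj1
      have hb2 : Function.Bijective p2 := by
        constructor
        · intro a b hab
          have hd : ((a : g₁ × g₂) - b) ∈ g := g.sub_mem a.2 b.2
          have h2 : ((a : g₁ × g₂) - b).2 = 0 := by
            have : (a : g₁ × g₂).2 = (b : g₁ × g₂).2 := hab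
            simp [this]
          have hd' : ((((a : g₁ × g₂) - b).1, (0 : g₂)) : g₁ × g₂) ∈ g := by
            rwa [show ((((a : g₁ × g₂) - b).1, (0 : g₂)) : g₁ × g₂)
                = (a : g₁ × g₂) - b from Prod.ext rfl h2.symm]
          have h1 := hK1 _ hd'
          have : (a : g₁ × g₂) = b := by
            have := sub_eq_zero.mp (Prod.ext h1 h2 : ((a : g₁ × g₂) - b) = 0)
            exact this
          exact Subtype.ext this
        · exact hsurj2
      let E1 : g ≃ₗ⁅Q⁆ g₁ := LieEquiv.ofBijective p1 hb1
      let E2 : g ≃ₗ⁅Q⁆ g₂ := LieEquiv.ofBijective p2 hb2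
      refine ⟨E1.symm.trans E2, fun x => ?_⟩
      have hE1 : ∀ u : g, E1 u = (u : g₁ × g₂).1 := fun _ => rfl
      have hE2 : ∀ u : g, E2 u = (u : g₁ × g₂).2 := fun _ => rfl
      constructor
      · intro hx
        show E2 (E1.symm x.1) = x.2
        have hx1 : x.1 = E1 (⟨x, hx⟩ : g) := (hE1 ⟨x, hx⟩).symm
        rw [hx1, E1.symm_apply_apply, hE2]
      · intro hx
        set u : g := E1.symm x.1 with hu
        have h1 : (u : g₁ × g₂).1 = x.1 := by
          rw [← hE1 u, hu, E1.apply_symm_apply]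
        have h2 : (u : g₁ × g₂).2 = x.2 := by
          rw [← hE2 u]
          exact hx
        have : (u : g₁ × g₂) = x := Prod.ext h1 h2
        rw [← this]
        exact u.2
  exact ⟨main, fun hni => main.resolve_right fun ⟨e, _⟩ => hni.elim e⟩
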